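/- arXiv:1805.04312 — 6 statements merged into one kernel-verified Lean document; each statement's English description precedes it below -/
import Mathlib

section
/- Let q ≥ 2 be a real number, N a natural number, v ∈ ℝ², and b₁, …, b_N ∈ ℝ². Set X_j = ⟨v, b_j⟩ and Y_j = ⟨I v, b_j⟩. Then (q − 2) · |Σ_{j=1}^N X_j Y_j| ≤ c_q · ( (q − 2) Σ_{j=1}^N X_j² + ‖v‖² Σ_{j=1}^N ‖b_j‖² ). (This is the pointwise form of the key inequality |(∂φ(U), I∂ψ(U))| ≤ c_q (∂φ(U), ∂ψ(U)).) -/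
open scoped RealInnerProductSpace

/-- The rotation by π/2 on ℝ², the real 2×2 realization of the imaginary unit. -/
noncomputable def rotI (v : EuclideanSpace ℝ (Fin 2)) : EuclideanSpace ℝ (Fin 2) :=
  (WithLp.equiv 2 (Fin 2 → ℝ)).symm ![-(v 1), v 0]

lemma pyth (v b : EuclideanSpace ℝ (Fin 2)) :
    ⟪v, b⟫ ^ 2 + ⟪rotI v, b⟫ ^ 2 = ‖v‖ ^ 2 * ‖b‖ ^ 2 := by
  rw [← real_inner_self_eq_norm_sq, ← real_inner_self_eq_norm_sq]
  simp only [rotI, PiLp.inner_apply, RCLike.inner_apply, conj_trivial, Fin.sum_univ_two,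
    WithLp.equiv_symm_apply, WithLp.ofLp_toLp, Matrix.cons_val_zero, Matrix.cons_val_one, Matrix.head_cons]
  ring

lemma perj (q : ℝ) (hq : 2 ≤ q) (X Y : ℝ) :
    (q - 2) * |X * Y| ≤ (q - 2) / (2 * Real.sqrt (q - 1)) *
      ((q - 2) * X ^ 2 + (X ^ 2 + Y ^ 2)) := by
  set s := Real.sqrt (q - 1) with hs
  have hs0 : 0 < s := Real.sqrt_pos.mpr (by linarith)
  have hs2 : s ^ 2 = q - 1 := Real.sq_sqrt (by linarith)
  have hXY : |X * Y| = |X| * |Y| := abs_mul X Y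
  have h1 : 2 * s * |X * Y| ≤ (q - 1) * X ^ 2 + Y ^ 2 := by
    rw [hXY]
    nlinarith [sq_nonneg (s * |X| - |Y|), sq_abs X, sq_abs Y, abs_nonneg X, abs_nonneg Y]
  rw [div_mul_eq_mul_div, le_div_iff₀ (by nlinarith)]
  nlinarith [abs_nonneg (X * Y)]

theorem stmt3 (q : ℝ) (hq : 2 ≤ q) (N : ℕ) (v : EuclideanSpace ℝ (Fin 2))
    (b : Fin N → EuclideanSpace ℝ (Fin 2)) :
    (q - 2) * |∑ j, ⟪v, b j⟫ * ⟪rotI v, b j⟫| ≤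
      (q - 2) / (2 * Real.sqrt (q - 1)) *
        ((q - 2) * (∑ j, ⟪v, b j⟫ ^ 2) + ‖v‖ ^ 2 * ∑ j, ‖b j‖ ^ 2) := by
  calc (q - 2) * |∑ j, ⟪v, b j⟫ * ⟪rotI v, b j⟫|
      ≤ ∑ j, (q - 2) * |⟪v, b j⟫ * ⟪rotI v, b j⟫| := by
        rw [← Finset.mul_sum]
        exact mul_le_mul_of_nonneg_left (Finset.abs_sum_le_sum_abs _ _) (by linarith)
    _ ≤ ∑ j, (q - 2) / (2 * Real.sqrt (q - 1)) *
          ((q - 2) * ⟪v, b j⟫ ^ 2 + (⟪v, b j⟫ ^ 2 + ⟪rotI v, b j⟫ ^ 2)) :=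
        Finset.sum_le_sum fun j _ => perj q hq _ _
    _ = (q - 2) / (2 * Real.sqrt (q - 1)) *
        ((q - 2) * (∑ j, ⟪v, b j⟫ ^ 2) + ‖v‖ ^ 2 * ∑ j, ‖b j‖ ^ 2) := by
        simp_rw [pyth v, Finset.mul_sum, ← Finset.sum_add_distrib, mul_add, Finset.mul_sum]
        exact Finset.sum_congr rfl fun i _ => by ring
end

section
/- Let (Ω, μ) be a measure space, q ≥ 2 a real number, N a natural number, w : Ω → [0, ∞) measurable, V : Ω → ℝ² measurable, and G₁, …, G_N : Ω → ℝ² measurable. Set X_j(x) = ⟨V(x), G_j(x)⟩, Y_j(x) = ⟨I V(x), G_j(x)⟩, and interpret ‖V(x)‖^{q−4} as 0 whenever V(x) = 0. Assume that the function h₂(x) := w(x) · ( (q − 2) ‖V(x)‖^{q−4} Σ_j X_j(x)² + ‖V(x)‖^{q−2} Σ_j ‖G_j(x)‖² ) is integrable. Then h₁(x) := w(x) · (q − 2) ‖V(x)‖^{q−4} Σ_j X_j(x) Y_j(x) is integrable and |∫_Ω h₁ dμ| ≤ c_q ∫_Ω h₂ dμ. (This is the weighted integral key inequality with weight w = |∇U|^{p−2}.)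 -/
open scoped RealInnerProductSpace
open MeasureTheory

attribute [local instance] Classical.propDecidable

lemma inner_coords (v g : EuclideanSpace ℝ (Fin 2)) : ⟪v, g⟫ = v 0 * g 0 + v 1 * g 1 := by
  simp [PiLp.inner_apply, Fin.sum_univ_two, RCLike.inner_apply, mul_comm]

lemma rot_sq (v g : EuclideanSpace ℝ (Fin 2)) :
    ⟪v, g⟫ ^ 2 + ⟪rotI v, g⟫ ^ 2 = ‖v‖ ^ 2 * ‖g‖ ^ 2 := by
  rw [← real_inner_self_eq_norm_sq, ← real_inner_self_eq_norm_sq]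
  rw [inner_coords, inner_coords, inner_coords, inner_coords]
  show _ + (rotI v 0 * g 0 + rotI v 1 * g 1) ^ 2 = _
  rw [show ∀ v : EuclideanSpace ℝ (Fin 2), rotI v 0 = -(v 1) from fun _ => rfl,
    show ∀ v : EuclideanSpace ℝ (Fin 2), rotI v 1 = v 0 from fun _ => rfl]
  ring

lemma rotI_measurable {Ω : Type*} [MeasurableSpace Ω] (V : Ω → EuclideanSpace ℝ (Fin 2))
    (hV : Measurable V) : Measurable (fun x => rotI (V x)) := by
  apply (WithLp.measurable_toLp 2 (Fin 2 → ℝ)).comp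
  apply measurable_pi_iff.2
  intro i
  have h0 : Measurable fun x => V x 0 := (measurable_pi_apply 0).comp ((WithLp.measurable_ofLp 2 _).comp hV)
  have h1 : Measurable fun x => V x 1 := (measurable_pi_apply 1).comp ((WithLp.measurable_ofLp 2 _).comp hV)
  fin_cases i
  · exact h1.neg
  · exact h0

lemma key_ineq (q : ℝ) (hq : 2 ≤ q) (X Y : ℝ) :
    (q - 2) * |X * Y| ≤ (q - 2) / (2 * Real.sqrt (q - 1)) * ((q - 1) * X ^ 2 + Y ^ 2) := by
  have hs : Real.sqrt (q - 1) > 0 := Real.sqrt_pos.2 (by linarith)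
  have hsq : Real.sqrt (q - 1) ^ 2 = q - 1 := Real.sq_sqrt (by linarith)
  have h2 : 2 * (Real.sqrt (q - 1) * |X|) * |Y| ≤ (Real.sqrt (q - 1) * |X|) ^ 2 + |Y| ^ 2 :=
    two_mul_le_add_sq _ _
  have hcq : 0 ≤ (q - 2) / (2 * Real.sqrt (q - 1)) := div_nonneg (by linarith) (by positivity)
  have hmono := mul_le_mul_of_nonneg_left h2 hcq
  have hXY : (q - 2) / (2 * Real.sqrt (q - 1)) * (2 * (Real.sqrt (q - 1) * |X|) * |Y|)
      = (q - 2) * (|X| * |Y|) := by field_simp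
  calc (q - 2) * |X * Y|
      = (q - 2) / (2 * Real.sqrt (q - 1)) * (2 * (Real.sqrt (q - 1) * |X|) * |Y|) := by
        rw [hXY, abs_mul]
    _ ≤ (q - 2) / (2 * Real.sqrt (q - 1)) * ((Real.sqrt (q - 1) * |X|) ^ 2 + |Y| ^ 2) := hmono
    _ = (q - 2) / (2 * Real.sqrt (q - 1)) * ((q - 1) * X ^ 2 + Y ^ 2) := by
        rw [mul_pow, hsq, sq_abs, sq_abs]

theorem stmt4 {Ω : Type*} [MeasurableSpace Ω] (μ : Measure Ω)
    (q : ℝ) (hq : 2 ≤ q) (N : ℕ)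
    (w : Ω → ℝ) (hw0 : ∀ x, 0 ≤ w x) (hw : Measurable w)
    (V : Ω → EuclideanSpace ℝ (Fin 2)) (hV : Measurable V)
    (G : Fin N → Ω → EuclideanSpace ℝ (Fin 2)) (hG : ∀ j, Measurable (G j))
    (h₁ h₂ : Ω → ℝ)
    (hh₁ : h₁ = fun x => w x * ((q - 2) * (if V x = 0 then 0 else ‖V x‖ ^ (q - 4)) *
        ∑ j, ⟪V x, G j x⟫ * ⟪rotI (V x), G j x⟫))
    (hh₂ : h₂ = fun x => w x *
        ((q - 2) * (if V x = 0 then 0 else ‖V x‖ ^ (q - 4)) * (∑ j, ⟪V x, G j x⟫ ^ 2) +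
          ‖V x‖ ^ (q - 2) * ∑ j, ‖G j x‖ ^ 2))
    (hint : Integrable h₂ μ) :
    Integrable h₁ μ ∧
      |∫ x, h₁ x ∂μ| ≤ (q - 2) / (2 * Real.sqrt (q - 1)) * ∫ x, h₂ x ∂μ := by
  set c := (q - 2) / (2 * Real.sqrt (q - 1)) with hc_def
  have hq2 : (0:ℝ) ≤ q - 2 := by linarith
  have hc : 0 ≤ c := div_nonneg hq2 (by positivity)
  -- nonnegativity of h₂
  have h₂nn : ∀ x, 0 ≤ h₂ x := by
    intro x
    rw [hh₂]
    apply mul_nonneg (hw0 x)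
    apply add_nonneg
    · apply mul_nonneg (mul_nonneg hq2 _)
      · exact Finset.sum_nonneg fun j _ => sq_nonneg _
      · split
        · exact le_refl 0
        · exact Real.rpow_nonneg (norm_nonneg _) _
    · exact mul_nonneg (Real.rpow_nonneg (norm_nonneg _) _)
        (Finset.sum_nonneg fun j _ => sq_nonneg _)
  -- pointwise estimate
  have hpt : ∀ x, |h₁ x| ≤ c * h₂ x := by
    intro x
    by_cases hv : V x = 0
    · have : h₁ x = 0 := by rw [hh₁]; simp [hv]
      rw [this, abs_zero]
      exact mul_nonneg hc (h₂nn x)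
    · have hvpos : 0 < ‖V x‖ := norm_pos_iff.2 hv
      set A := ‖V x‖ ^ (q - 4) with hA_def
      have hA0 : 0 ≤ A := Real.rpow_nonneg (norm_nonneg _) _
      have hB : ‖V x‖ ^ (q - 2) = A * ‖V x‖ ^ 2 := by
        rw [hA_def, ← Real.rpow_natCast (‖V x‖) 2, ← Real.rpow_add hvpos]
        congr 1
        push_cast
        ring
      set S1 := ∑ j, ⟪V x, G j x⟫ * ⟪rotI (V x), G j x⟫ with hS1
      set S2 := ∑ j, ⟪V x, G j x⟫ ^ 2 with hS2
      set S3 := ∑ j, ‖G j x‖ ^ 2 with hS3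
      set T := ∑ j, |⟪V x, G j x⟫ * ⟪rotI (V x), G j x⟫| with hT
      have step1 : |S1| ≤ T := Finset.abs_sum_le_sum_abs _ _
      have step2 : (q - 2) * T ≤ c * ((q - 2) * S2 + ‖V x‖ ^ 2 * S3) := by
        have perj : ∀ j : Fin N, (q - 2) * |⟪V x, G j x⟫ * ⟪rotI (V x), G j x⟫|
            ≤ c * ((q - 2) * ⟪V x, G j x⟫ ^ 2 + ‖V x‖ ^ 2 * ‖G j x‖ ^ 2) := by
          intro j
          have hk := key_ineq q hq ⟪V x, G j x⟫ ⟪rotI (V x), G j x⟫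
          have hr := rot_sq (V x) (G j x)
          have : (q - 1) * ⟪V x, G j x⟫ ^ 2 + ⟪rotI (V x), G j x⟫ ^ 2
              = (q - 2) * ⟪V x, G j x⟫ ^ 2 + ‖V x‖ ^ 2 * ‖G j x‖ ^ 2 := by linarith
          rw [← hc_def] at hk
          linarith [hk, mul_le_mul_of_nonneg_left this.le hc]
        calc (q - 2) * T = ∑ j, (q - 2) * |⟪V x, G j x⟫ * ⟪rotI (V x), G j x⟫| := by
              rw [hT, Finset.mul_sum]
          _ ≤ ∑ j, c * ((q - 2) * ⟪V x, G j x⟫ ^ 2 + ‖V x‖ ^ 2 * ‖G j x‖ ^ 2) :=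
              Finset.sum_le_sum fun j _ => perj j
          _ = c * ((q - 2) * S2 + ‖V x‖ ^ 2 * S3) := by
              simp only [hS2, hS3, Finset.mul_sum, mul_add, Finset.sum_add_distrib]
      have e1 : |h₁ x| = w x * ((q - 2) * A * |S1|) := by
        rw [hh₁]
        simp only [if_neg hv, ← hA_def, ← hS1]
        rw [abs_mul, abs_mul, abs_of_nonneg (hw0 x), abs_of_nonneg (mul_nonneg hq2 hA0)]
      have hmid : (q - 2) * A * |S1| ≤ A * (c * ((q - 2) * S2 + ‖V x‖ ^ 2 * S3)) := by
        have t1 : (q - 2) * |S1| ≤ (q - 2) * T := mul_le_mul_of_nonneg_left step1 hq2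
        have t2 : (q - 2) * |S1| ≤ c * ((q - 2) * S2 + ‖V x‖ ^ 2 * S3) := t1.trans step2
        calc (q - 2) * A * |S1| = A * ((q - 2) * |S1|) := by ring
          _ ≤ A * (c * ((q - 2) * S2 + ‖V x‖ ^ 2 * S3)) := mul_le_mul_of_nonneg_left t2 hA0
      calc |h₁ x| = w x * ((q - 2) * A * |S1|) := e1
        _ ≤ w x * (A * (c * ((q - 2) * S2 + ‖V x‖ ^ 2 * S3))) :=
            mul_le_mul_of_nonneg_left hmid (hw0 x)
        _ = c * h₂ x := by
            rw [hh₂]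
            simp only [if_neg hv, ← hA_def, ← hS2, ← hS3]
            rw [hB]
            ring
  -- measurability of h₁
  have h₁meas : Measurable h₁ := by
    rw [hh₁]
    apply hw.mul
    apply Measurable.mul
    · apply measurable_const.mul
      exact Measurable.ite (hV (measurableSet_singleton 0)) measurable_const
        (hV.norm.pow_const _)
    · apply Finset.measurable_sum
      intro j _
      exact (hV.inner (hG j)).mul ((rotI_measurable V hV).inner (hG j))
  have h₁int : Integrable h₁ μ := by
    apply Integrable.mono' (hint.const_mul c) h₁meas.aestronglyMeasurable
    exact Filter.Eventually.of_forall fun x => by simpa [Real.norm_eq_abs] using hpt x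
  refine ⟨h₁int, ?_⟩
  calc |∫ x, h₁ x ∂μ| = ‖∫ x, h₁ x ∂μ‖ := (Real.norm_eq_abs _).symm
    _ ≤ ∫ x, ‖h₁ x‖ ∂μ := norm_integral_le_integral_norm _
    _ = ∫ x, |h₁ x| ∂μ := by simp [Real.norm_eq_abs]
    _ ≤ ∫ x, c * h₂ x ∂μ := integral_mono h₁int.abs (hint.const_mul c) hpt
    _ = c * ∫ x, h₂ x ∂μ := integral_const_mul c h₂
end

section
/- Let q ≥ 2 be a real number, μ ≥ 0, and t ≥ 0. Then t^q/q + (μ/2) · t^{2(q−1)} ≤ (1/q) · ((1 + μ t^{q−2}) t)^q. (This is the pointwise form of the inequality ψ_μ(U) = ψ(V) + (μ/2)|∂ψ(V)|² ≤ ψ(U) for the Moreau–Yosida regularization of ψ(U) = (1/q)∫|U|^q, where t = |V| and (1+μt^{q−2})t = |U|.) -/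
theorem stmt7 (q : ℝ) (hq : 2 ≤ q) (μ : ℝ) (hμ : 0 ≤ μ) (t : ℝ) (ht : 0 ≤ t) :
    t ^ q / q + μ / 2 * t ^ (2 * (q - 1)) ≤ 1 / q * ((1 + μ * t ^ (q - 2)) * t) ^ q := by
  rcases eq_or_lt_of_le ht with h0 | h0
  · rw [← h0]
    simp [Real.zero_rpow (show q ≠ 0 by linarith),
      Real.zero_rpow (show 2 * (q - 1) ≠ 0 by nlinarith)]
  · have hq0 : 0 < q := by linarith
    set a := μ * t ^ (q - 2) with ha_def
    have ha : 0 ≤ a := mul_nonneg hμ (Real.rpow_nonneg ht _)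
    have hbern : 1 + q * a ≤ (1 + a) ^ q :=
      one_add_mul_self_le_rpow_one_add (by linarith) (by linarith)
    have hmul : ((1 + a) * t) ^ q = (1 + a) ^ q * t ^ q :=
      Real.mul_rpow (by linarith) ht
    have htq : 0 ≤ t ^ q := Real.rpow_nonneg ht _
    have hpow : t ^ (q - 2) * t ^ q = t ^ (2 * (q - 1)) := by
      rw [← Real.rpow_add h0]; ring_nf
    have key : a * t ^ q = μ * t ^ (2 * (q - 1)) := by
      rw [ha_def, mul_assoc, hpow]
    have h1 : 1 / q * ((1 + q * a) * t ^ q) ≤ 1 / q * ((1 + a) ^ q * t ^ q) := by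
      apply mul_le_mul_of_nonneg_left (mul_le_mul_of_nonneg_right hbern htq)
      positivity
    have h2 : 1 / q * ((1 + q * a) * t ^ q) = t ^ q / q + a * t ^ q := by
      field_simp
    have h3 : 0 ≤ t ^ (2 * (q - 1)) := Real.rpow_nonneg ht _
    rw [hmul]
    calc t ^ q / q + μ / 2 * t ^ (2 * (q - 1))
        ≤ t ^ q / q + μ * t ^ (2 * (q - 1)) := by nlinarith
      _ = 1 / q * ((1 + q * a) * t ^ q) := by rw [h2, key]
      _ ≤ _ := h1
end

section
/- Let λ > 0, κ > 0, α, β ∈ ℝ, and r > 0. Assume that the pair (α/λ, β/κ) belongs to the CGL region CGL(r), i.e. either αβ ≥ 0, or (|α/λ| · |β/κ| − 1)/(|α/λ| + |β/κ|) < r. Then there exists δ > 0 such that r κ δ² + 2 δ √((1 + r²) λ κ) + r λ > |δ² β − α|. (This is the claim J(δ, 0) > 0 for some δ > 0, which is the key step in the a priori estimate of Lemma 5.7.) -/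
theorem stmt8 (lam κ α β r : ℝ) (hlam : 0 < lam) (hκ : 0 < κ) (hr : 0 < r)
    (hCGL : 0 ≤ α * β ∨ (|α / lam| * |β / κ| - 1) / (|α / lam| + |β / κ|) < r) :
    ∃ δ : ℝ, 0 < δ ∧
      |δ ^ 2 * β - α| < r * κ * δ ^ 2 + 2 * δ * Real.sqrt ((1 + r ^ 2) * lam * κ) + r * lam := by
  set S := Real.sqrt ((1 + r ^ 2) * lam * κ) with hS
  have hSpos : 0 < S := Real.sqrt_pos.mpr (by positivity)
  have hS2 : S ^ 2 = (1 + r ^ 2) * lam * κ := Real.sq_sqrt (by positivity)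
  have key : ∀ A B : ℝ, 0 ≤ A → 0 ≤ B → A * B < lam * κ + r * (κ * A + lam * B) →
      ∃ δ : ℝ, 0 < δ ∧ A + B * δ ^ 2 < r * κ * δ ^ 2 + 2 * δ * S + r * lam := by
    intro A B hA hB h
    by_cases hBcase : B ≤ r * κ
    · refine ⟨A / (2 * S) + 1, by positivity, ?_⟩
      have h1 : B * (A / (2 * S) + 1) ^ 2 ≤ r * κ * (A / (2 * S) + 1) ^ 2 :=
        mul_le_mul_of_nonneg_right hBcase (by positivity)
      have h2 : 2 * (A / (2 * S) + 1) * S = A + 2 * S := by field_simp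
      nlinarith [mul_pos hr hlam]
    · push_neg at hBcase
      have hden : 0 < B - r * κ := by linarith
      refine ⟨S / (B - r * κ), by positivity, ?_⟩
      have hkey : (A - r * lam) * (B - r * κ) < S ^ 2 := by rw [hS2]; nlinarith
      have hδ2 : (B - r * κ) * (S / (B - r * κ)) ^ 2 = S * (S / (B - r * κ)) := by
        field_simp
      have hlt : A - r * lam < S * (S / (B - r * κ)) := by
        have : S * (S / (B - r * κ)) = S ^ 2 / (B - r * κ) := by ring
        rw [this, lt_div_iff₀ hden]; linarith
      nlinarith [hδ2, hlt]
  have tri : ∀ δ : ℝ, |δ ^ 2 * β - α| ≤ |α| + |β| * δ ^ 2 := by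
    intro δ
    calc |δ ^ 2 * β - α| ≤ |δ ^ 2 * β| + |α| := abs_sub _ _
    _ = |α| + |β| * δ ^ 2 := by rw [abs_mul, abs_pow, sq_abs]; ring
  rcases hCGL with hle | hlt
  · rcases lt_or_eq_of_le hle with hpos | hzero
    · -- α * β > 0
      have hβ : β ≠ 0 := by rintro rfl; simp at hpos
      have hq : 0 < α / β := by
        have e : α / β = (α * β) / β ^ 2 := by field_simp
        rw [e]; positivity
      refine ⟨Real.sqrt (α / β), Real.sqrt_pos.mpr hq, ?_⟩
      have hsq : Real.sqrt (α / β) ^ 2 = α / β := Real.sq_sqrt hq.le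
      rw [hsq]
      have : α / β * β - α = 0 := by field_simp; ring
      rw [this, abs_zero]
      have hδ : 0 < Real.sqrt (α / β) := Real.sqrt_pos.mpr hq
      positivity
    · -- α * β = 0
      have hab : |α| * |β| < lam * κ + r * (κ * |α| + lam * |β|) := by
        rw [← abs_mul, ← hzero, abs_zero]
        positivity
      obtain ⟨δ, hδ, hineq⟩ := key |α| |β| (abs_nonneg _) (abs_nonneg _) hab
      exact ⟨δ, hδ, lt_of_le_of_lt (tri δ) (by linarith)⟩
  · have hab : |α| * |β| < lam * κ + r * (κ * |α| + lam * |β|) := by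
      rw [abs_div, abs_div, abs_of_pos hlam, abs_of_pos hκ] at hlt
      by_cases hz : |α| / lam + |β| / κ = 0
      · have h1 : |α| = 0 := by
          have := abs_nonneg α; have := abs_nonneg β
          have h2 : 0 ≤ |α| / lam := by positivity
          have h3 : 0 ≤ |β| / κ := by positivity
          have : |α| / lam = 0 := by linarith
          field_simp at this; simp [this]
        have h2 : |β| = 0 := by
          have h2 : 0 ≤ |α| / lam := by positivity
          have h3 : 0 ≤ |β| / κ := by positivity
          have : |β| / κ = 0 := by linarith
          field_simp at this; simp [this]
        rw [h1, h2]; nlinarith [mul_pos hlam hκ]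
      · have hzpos : 0 < |α| / lam + |β| / κ := by
          rcases lt_or_eq_of_le (by positivity : (0:ℝ) ≤ |α| / lam + |β| / κ) with h | h
          · exact h
          · exact absurd h.symm hz
        rw [div_lt_iff₀ hzpos] at hlt
        have e1 : |α| / lam * (|β| / κ) = |α| * |β| / (lam * κ) := by field_simp
        have e2 : |α| / lam + |β| / κ = (κ * |α| + lam * |β|) / (lam * κ) := by
          field_simp
        rw [e1, e2] at hlt
        have hlκ : 0 < lam * κ := mul_pos hlam hκ
        have h3 := mul_lt_mul_of_pos_right hlt hlκ
        field_simp at h3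
        nlinarith [h3]
    obtain ⟨δ, hδ, hineq⟩ := key |α| |β| (abs_nonneg _) (abs_nonneg _) hab
    exact ⟨δ, hδ, lt_of_le_of_lt (tri δ) (by linarith)⟩
end

section
/- Let N be a natural number and p ≥ 2 a real number. For all r, x ∈ ℝᴺ with ‖r‖ = 1 and ‖x‖ ≤ 1, one has ‖r + x‖^p + ‖r − x‖^p ≤ (1 + ‖x‖)^p + (1 − ‖x‖)^p, where ‖·‖ is the Euclidean norm on ℝᴺ. (Intermediate step in the proof of the local Clarkson inequality.) -/
lemma aux_conv {q U V u v : ℝ} (hq : 1 ≤ q) (hV : 0 ≤ V) (hu : u ≤ U) (hv : v ≤ U)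
    (hsum : u + v = U + V) : u ^ q + v ^ q ≤ U ^ q + V ^ q := by
  have hVv : V ≤ v := by linarith
  have hVu : V ≤ u := by linarith
  have hu0 : 0 ≤ u := le_trans hV hVu
  have hv0 : 0 ≤ v := le_trans hV hVv
  rcases eq_or_lt_of_le (le_trans hVu hu) with hUV | hUV
  · have hu' : u = U := by linarith
    have hv' : v = V := by linarith
    rw [hu', hv']
  · set l : ℝ := (u - V) / (U - V) with hl
    have hden : 0 < U - V := by linarith
    have hl0 : 0 ≤ l := div_nonneg (by linarith) hden.le
    have hl1 : l ≤ 1 := by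
      rw [div_le_one hden]; linarith
    have hcomp : 1 - l = (U - u) / (U - V) := by
      field_simp [hl]
      rw [hl, sub_mul, div_mul_cancel₀ _ hden.ne']; ring
    have huu : u = l * U + (1 - l) * V := by
      rw [hcomp, hl]; field_simp; ring
    have hvv : v = (1 - l) * U + l * V := by
      rw [hcomp, hl]; field_simp; nlinarith [hsum]
    have hf := convexOn_rpow hq
    have h1 := hf.2 (Set.mem_Ici.2 (by linarith : (0:ℝ) ≤ U)) (Set.mem_Ici.2 hV)
      hl0 (by linarith : (0:ℝ) ≤ 1 - l) (by ring)
    have h2 := hf.2 (Set.mem_Ici.2 (by linarith : (0:ℝ) ≤ U)) (Set.mem_Ici.2 hV)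
      (by linarith : (0:ℝ) ≤ 1 - l) hl0 (by ring)
    simp only [smul_eq_mul] at h1 h2
    calc u ^ q + v ^ q = (l * U + (1 - l) * V) ^ q + ((1 - l) * U + l * V) ^ q := by
          rw [← huu, ← hvv]
      _ ≤ (l * U ^ q + (1 - l) * V ^ q) + ((1 - l) * U ^ q + l * V ^ q) :=
          add_le_add h1 h2
      _ = U ^ q + V ^ q := by ring

theorem stmt12 (N : ℕ) (p : ℝ) (hp : 2 ≤ p) (r x : EuclideanSpace ℝ (Fin N))
    (hr : ‖r‖ = 1) (hx : ‖x‖ ≤ 1) :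
    ‖r + x‖ ^ p + ‖r - x‖ ^ p ≤ (1 + ‖x‖) ^ p + (1 - ‖x‖) ^ p := by
  set t := ‖x‖ with ht
  have ht0 : 0 ≤ t := norm_nonneg x
  set a := ‖r + x‖ with ha
  set b := ‖r - x‖ with hb
  have ha0 : 0 ≤ a := norm_nonneg _
  have hb0 : 0 ≤ b := norm_nonneg _
  have haA : a ≤ 1 + t := by
    calc a ≤ ‖r‖ + ‖x‖ := norm_add_le r x
      _ = 1 + t := by rw [hr]
  have hbA : b ≤ 1 + t := by
    calc b ≤ ‖r‖ + ‖x‖ := norm_sub_le r x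
      _ = 1 + t := by rw [hr]
  have hpar : a * a + b * b = (1 + t) * (1 + t) + (1 - t) * (1 - t) := by
    have := parallelogram_law_with_norm ℝ r x
    rw [hr] at this
    rw [ha, hb, ht]; linear_combination this
  have key : (a * a) ^ (p / 2) + (b * b) ^ (p / 2)
      ≤ ((1 + t) * (1 + t)) ^ (p / 2) + ((1 - t) * (1 - t)) ^ (p / 2) := by
    apply aux_conv (by linarith) (mul_nonneg (by linarith) (by linarith))
      (mul_self_le_mul_self ha0 haA) (mul_self_le_mul_self hb0 hbA) hpar
  have sq_rpow : ∀ c : ℝ, 0 ≤ c → (c * c) ^ (p / 2) = c ^ p := by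
    intro c hc
    rw [← sq, ← Real.rpow_natCast c 2, ← Real.rpow_mul hc]
    norm_num
    rw [show 2 * (p / 2) = p by ring]
  rw [sq_rpow a ha0, sq_rpow b hb0, sq_rpow (1 + t) (by linarith),
    sq_rpow (1 - t) (by linarith)] at key
  exact key
end

section
/- Let (Ω, μ) be a σ-finite measure space, 0 < q ≤ p < ∞ real numbers, and f₁, f₂ : Ω → ℝ measurable functions such that the right-hand side below is finite. Then ( ‖f₁‖_{L^q}^p + ‖f₂‖_{L^q}^p )^{1/p} ≤ ( ∫_Ω ( |f₁(y)|^p + |f₂(y)|^p )^{q/p} dμ(y) )^{1/q}. (Two-function instance of the extended Minkowski integral inequality, used in the proof of Clarkson's second inequality.) -/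
open MeasureTheory
open scoped ENNReal

theorem stmt16 {Ω : Type*} [MeasurableSpace Ω] (μ : Measure Ω) [SigmaFinite μ]
    (p q : ℝ) (hq : 0 < q) (hqp : q ≤ p)
    (f₁ f₂ : Ω → ℝ) (hm₁ : Measurable f₁) (hm₂ : Measurable f₂)
    (hrhs : Integrable (fun y => (|f₁ y| ^ p + |f₂ y| ^ p) ^ (q / p)) μ) :
    ((∫ y, |f₁ y| ^ q ∂μ) ^ (p / q) + (∫ y, |f₂ y| ^ q ∂μ) ^ (p / q)) ^ (1 / p) ≤
      (∫ y, (|f₁ y| ^ p + |f₂ y| ^ p) ^ (q / p) ∂μ) ^ (1 / q) := by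
  have hp : 0 < p := hq.trans_le hqp
  set r : ℝ := p / q with hrdef
  have hr1 : 1 ≤ r := (one_le_div hq).2 hqp
  have hr0 : 0 < r := lt_of_lt_of_le one_pos hr1
  have hqr : q * r = p := by rw [hrdef, mul_comm, div_mul_cancel₀ _ hq.ne']
  set P : ℝ≥0∞ := ENNReal.ofReal r with hPdef
  haveI : Fact (1 ≤ P) := ⟨by simpa [hPdef] using ENNReal.one_le_ofReal.2 hr1⟩
  have hPt : P.toReal = r := ENNReal.toReal_ofReal hr0.le
  set L := WithLp.prodContinuousLinearEquiv P ℝ ℝ ℝ with hLdef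
  set F : Ω → WithLp P (ℝ × ℝ) := fun y => L.symm (|f₁ y| ^ q, |f₂ y| ^ q) with hFdef
  have hnorm : ∀ y, ‖F y‖ = (|f₁ y| ^ p + |f₂ y| ^ p) ^ (q / p) := by
    intro y
    rw [WithLp.prod_norm_eq_add (by rw [hPt]; exact hr0)]
    have h1 : (F y).fst = |f₁ y| ^ q := rfl
    have h2 : (F y).snd = |f₂ y| ^ q := rfl
    rw [h1, h2, hPt, Real.norm_eq_abs, Real.norm_eq_abs,
      abs_of_nonneg (Real.rpow_nonneg (abs_nonneg _) _),
      abs_of_nonneg (Real.rpow_nonneg (abs_nonneg _) _),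
      ← Real.rpow_mul (abs_nonneg _) q r, ← Real.rpow_mul (abs_nonneg _) q r, hqr]
    congr 1
    rw [hrdef, one_div_div]
  have hmg₁ : Measurable fun y => |f₁ y| ^ q :=
    (Real.continuous_rpow_const hq.le).measurable.comp hm₁.abs
  have hmg₂ : Measurable fun y => |f₂ y| ^ q :=
    (Real.continuous_rpow_const hq.le).measurable.comp hm₂.abs
  have hmeas : AEStronglyMeasurable F μ :=
    L.symm.continuous.comp_aestronglyMeasurable
      ((hmg₁.prodMk hmg₂).aestronglyMeasurable)
  have hF : Integrable F μ :=
    hrhs.mono' hmeas (Filter.Eventually.of_forall fun y => le_of_eq (hnorm y))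
  have hg : ∀ y, |(|f₁ y| ^ q)| ≤ (|f₁ y| ^ p + |f₂ y| ^ p) ^ (q / p) ∧
      |(|f₂ y| ^ q)| ≤ (|f₁ y| ^ p + |f₂ y| ^ p) ^ (q / p) := by
    intro y
    have hqp' : 0 ≤ q / p := div_nonneg hq.le hp.le
    constructor
    · rw [abs_of_nonneg (Real.rpow_nonneg (abs_nonneg _) _)]
      calc |f₁ y| ^ q = (|f₁ y| ^ p) ^ (q / p) := by
            rw [← Real.rpow_mul (abs_nonneg _), mul_div_cancel₀ _ hp.ne']
        _ ≤ (|f₁ y| ^ p + |f₂ y| ^ p) ^ (q / p) :=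
            Real.rpow_le_rpow (Real.rpow_nonneg (abs_nonneg _) _)
              (le_add_of_nonneg_right (Real.rpow_nonneg (abs_nonneg _) _)) hqp'
    · rw [abs_of_nonneg (Real.rpow_nonneg (abs_nonneg _) _)]
      calc |f₂ y| ^ q = (|f₂ y| ^ p) ^ (q / p) := by
            rw [← Real.rpow_mul (abs_nonneg _), mul_div_cancel₀ _ hp.ne']
        _ ≤ (|f₁ y| ^ p + |f₂ y| ^ p) ^ (q / p) :=
            Real.rpow_le_rpow (Real.rpow_nonneg (abs_nonneg _) _)
              (le_add_of_nonneg_left (Real.rpow_nonneg (abs_nonneg _) _)) hqp'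
  have hg₁ : Integrable (fun y => |f₁ y| ^ q) μ :=
    hrhs.mono' hmg₁.aestronglyMeasurable (Filter.Eventually.of_forall fun y => (hg y).1)
  have hg₂ : Integrable (fun y => |f₂ y| ^ q) μ :=
    hrhs.mono' hmg₂.aestronglyMeasurable (Filter.Eventually.of_forall fun y => (hg y).2)
  have hint : ∫ y, F y ∂μ = L.symm (∫ y, |f₁ y| ^ q ∂μ, ∫ y, |f₂ y| ^ q ∂μ) := by
    rw [hFdef]
    rw [ContinuousLinearEquiv.integral_comp_comm L.symm
      (fun y => (|f₁ y| ^ q, |f₂ y| ^ q)), integral_pair hg₁ hg₂]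
  have key : ‖∫ y, F y ∂μ‖ ≤ ∫ y, ‖F y‖ ∂μ := norm_integral_le_integral_norm F
  have hI₁ : 0 ≤ ∫ y, |f₁ y| ^ q ∂μ :=
    integral_nonneg fun y => Real.rpow_nonneg (abs_nonneg _) _
  have hI₂ : 0 ≤ ∫ y, |f₂ y| ^ q ∂μ :=
    integral_nonneg fun y => Real.rpow_nonneg (abs_nonneg _) _
  have hnormint : ‖∫ y, F y ∂μ‖ =
      ((∫ y, |f₁ y| ^ q ∂μ) ^ r + (∫ y, |f₂ y| ^ q ∂μ) ^ r) ^ (1 / r) := by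
    rw [hint, WithLp.prod_norm_eq_add (by rw [hPt]; exact hr0)]
    have h1 : (L.symm (∫ y, |f₁ y| ^ q ∂μ, ∫ y, |f₂ y| ^ q ∂μ)).fst
        = ∫ y, |f₁ y| ^ q ∂μ := rfl
    have h2 : (L.symm (∫ y, |f₁ y| ^ q ∂μ, ∫ y, |f₂ y| ^ q ∂μ)).snd
        = ∫ y, |f₂ y| ^ q ∂μ := rfl
    rw [h1, h2, hPt, Real.norm_eq_abs, Real.norm_eq_abs, abs_of_nonneg hI₁,
      abs_of_nonneg hI₂]
  have hS : 0 ≤ (∫ y, |f₁ y| ^ q ∂μ) ^ r + (∫ y, |f₂ y| ^ q ∂μ) ^ r :=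
    add_nonneg (Real.rpow_nonneg hI₁ _) (Real.rpow_nonneg hI₂ _)
  have hLHS : ((∫ y, |f₁ y| ^ q ∂μ) ^ r + (∫ y, |f₂ y| ^ q ∂μ) ^ r) ^ (1 / p)
      = ‖∫ y, F y ∂μ‖ ^ (1 / q) := by
    rw [hnormint, ← Real.rpow_mul hS]
    congr 1
    rw [← hqr]
    field_simp
  calc ((∫ y, |f₁ y| ^ q ∂μ) ^ r + (∫ y, |f₂ y| ^ q ∂μ) ^ r) ^ (1 / p)
      = ‖∫ y, F y ∂μ‖ ^ (1 / q) := hLHS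
    _ ≤ (∫ y, ‖F y‖ ∂μ) ^ (1 / q) :=
        Real.rpow_le_rpow (norm_nonneg _) key (by positivity)
    _ = (∫ y, (|f₁ y| ^ p + |f₂ y| ^ p) ^ (q / p) ∂μ) ^ (1 / q) := by
        congr 1
        exact integral_congr_ae (Filter.Eventually.of_forall hnorm)
end
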